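/- Take α = 2/Δt. For every pair W = (w,v) with w : ℝ² → ℝ differentiable, ∇w square-integrable on Ω, the trace x ↦ w(x,1) square-integrable on (0,1), and v : (0,1) → ℝ square-integrable, the coercivity estimate of the time-discrete monolithic form is sharp: B_m(W,W) = |||W|||²_m, where |||W|||²_m = ‖∇w‖²_Ω + (2/(g·Δt²))·‖w‖²_Γ + (g/2)·‖v‖²_Γ. -/

import Mathlib

open MeasureTheory Real Set

noncomputable section

/-- The computational domain `Ω = (0,1) × (0,1) ⊂ ℝ²`. -/
def Om : Set (ℝ × ℝ) := Ioo (0:ℝ) 1 ×ˢ Ioo (0:ℝ) 1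

/-- Partial derivative in the horizontal direction `x`. -/
def pdx (w : ℝ × ℝ → ℝ) (p : ℝ × ℝ) : ℝ := fderiv ℝ w p (1, 0)

/-- Partial derivative in the vertical direction `z`. -/
def pdz (w : ℝ × ℝ → ℝ) (p : ℝ × ℝ) : ℝ := fderiv ℝ w p (0, 1)

/-- Interior inner product `(∇w, ∇φ)_Ω = ∫_Ω ∇w·∇φ`. -/
def ipOm (w φ : ℝ × ℝ → ℝ) : ℝ := ∫ p in Om, (pdx w p * pdx φ p + pdz w p * pdz φ p)

/-- Free-surface inner product `(a, b)_Γ = ∫₀¹ a(x) b(x) dx`. -/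
def ipGa (a b : ℝ → ℝ) : ℝ := ∫ x in Ioo (0:ℝ) 1, a x * b x

/-- The trace of `w : ℝ² → ℝ` on the free surface `Γ` (the top edge `z = 1`). -/
def tr (w : ℝ × ℝ → ℝ) : ℝ → ℝ := fun x => w (x, 1)

/-- The gradient of `w` is square-integrable on `Ω`. -/
def GradL2 (w : ℝ × ℝ → ℝ) : Prop :=
  MemLp (pdx w) 2 (volume.restrict Om) ∧ MemLp (pdz w) 2 (volume.restrict Om)

/-- The trace of `w` on the free surface is square-integrable on `(0,1)`. -/
def TraceL2 (w : ℝ × ℝ → ℝ) : Prop :=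
  MemLp (tr w) 2 (volume.restrict (Ioo (0:ℝ) 1))

/-- A boundary function `v : (0,1) → ℝ` is square-integrable. -/
def BdryL2 (v : ℝ → ℝ) : Prop :=
  MemLp v 2 (volume.restrict (Ioo (0:ℝ) 1))

/-- The time-discrete monolithic bilinear form with parameter `α`:
`B_m(W,Φ) = (∇w,∇φ)_Ω − (2/Δt)(w,η)_Γ + (1/2)(v + (α/g)w, (2/Δt)φ + gη)_Γ`. -/
def Bm (g Δt α : ℝ) (w : ℝ × ℝ → ℝ) (v : ℝ → ℝ) (φ : ℝ × ℝ → ℝ) (η : ℝ → ℝ) : ℝ :=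
  ipOm w φ - (2 / Δt) * ipGa (tr w) η
    + (1 / 2) * ipGa (fun x => v x + (α / g) * tr w x)
        (fun x => (2 / Δt) * tr φ x + g * η x)

/-- The squared monolithic norm `|||W|||²_m = ‖∇w‖²_Ω + (2/(gΔt²))‖w‖²_Γ + (g/2)‖v‖²_Γ`. -/
def nmM2 (g Δt : ℝ) (w : ℝ × ℝ → ℝ) (v : ℝ → ℝ) : ℝ :=
  ipOm w w + (2 / (g * Δt ^ 2)) * ipGa (tr w) (tr w) + (g / 2) * ipGa v v

/-- For `α = 2/Δt` the coercivity estimate of the time-discrete monolithic form is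
sharp: `B_m(W,W) = |||W|||²_m`. -/
theorem monolithic_form_sharp_coercivity
    (g Δt : ℝ) (hg : 0 < g) (hΔt : 0 < Δt)
    (w : ℝ × ℝ → ℝ) (v : ℝ → ℝ)
    (hw : Differentiable ℝ w) (hgw : GradL2 w) (htw : TraceL2 w) (hv : BdryL2 v) :
    Bm g Δt (2 / Δt) w v w v = nmM2 g Δt w v := by
  have hconj : (1 : ENNReal) / 1 = 1 / 2 + 1 / 2 := by
    rw [ENNReal.div_add_div_same]
    norm_num
    exact (ENNReal.div_self two_ne_zero ENNReal.ofNat_ne_top).symm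
  have hmul : ∀ (a b : ℝ → ℝ), MemLp a 2 (volume.restrict (Ioo (0:ℝ) 1)) →
      MemLp b 2 (volume.restrict (Ioo (0:ℝ) 1)) →
      Integrable (fun x => a x * b x) (volume.restrict (Ioo (0:ℝ) 1)) := by
    intro a b ha hb
    have := (hb.smul ha : MemLp (a • b) 1 (volume.restrict (Ioo (0:ℝ) 1)))
    exact memLp_one_iff_integrable.mp this
  have hwv : Integrable (fun x => tr w x * v x) (volume.restrict (Ioo (0:ℝ) 1)) :=
    hmul _ _ htw hv
  have hww : Integrable (fun x => tr w x * tr w x) (volume.restrict (Ioo (0:ℝ) 1)) :=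
    hmul _ _ htw htw
  have hvv : Integrable (fun x => v x * v x) (volume.restrict (Ioo (0:ℝ) 1)) :=
    hmul _ _ hv hv
  have key :
      ipGa (fun x => v x + (2 / Δt / g) * tr w x)
          (fun x => (2 / Δt) * tr w x + g * v x)
        = (4 / Δt) * ipGa (tr w) v + (4 / (g * Δt ^ 2)) * ipGa (tr w) (tr w)
            + g * ipGa v v := by
    unfold ipGa
    have e1 : ∫ x in Ioo (0:ℝ) 1,
          (fun x => v x + 2 / Δt / g * tr w x) x * (fun x => 2 / Δt * tr w x + g * v x) x
        = ∫ x in Ioo (0:ℝ) 1, ((4 / Δt) * (tr w x * v x)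
            + (4 / (g * Δt ^ 2)) * (tr w x * tr w x) + g * (v x * v x)) := by
      refine integral_congr_ae (Filter.Eventually.of_forall fun x => ?_)
      have hg' : g ≠ 0 := hg.ne'
      have hΔt' : Δt ≠ 0 := hΔt.ne'
      field_simp
      ring
    have h12 : Integrable (fun x => 4 / Δt * (tr w x * v x)
        + 4 / (g * Δt ^ 2) * (tr w x * tr w x)) (volume.restrict (Ioo (0:ℝ) 1)) :=
      (hwv.const_mul _).add (hww.const_mul _)
    rw [e1, integral_add h12 (hvv.const_mul _),
      integral_add (hwv.const_mul _) (hww.const_mul _),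
      integral_const_mul, integral_const_mul, integral_const_mul]
  unfold Bm
  rw [key]
  unfold nmM2
  ring
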